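/- Let n ≥ 3, let 1 ≤ i < n/2, let η = e^{2πi/n}, and let g ∈ ℂ[X] be the polynomial with (X−1)(X−η^{i})(X−η^{−i})·g(X) = ((1−η^{i})(1−η^{−i})/n)·X(X+1)(X^{n}−1). Then g(η^{i}) = g(η^{−i}) = −1; consequently the quadratic (X−η^{i})(X−η^{−i}) divides both 1 + g(X) and X^{n} + g(X) in ℂ[X]. -/

import Mathlib

open Polynomial

/-- For `n ≥ 3`, `1 ≤ i < n/2`, `η = e^{2πi/n}`, and `g` the generic degree of `φ_{2,i}`, one has
`g(ηⁱ) = g(η⁻ⁱ) = −1`; consequently `(X−ηⁱ)(X−η⁻ⁱ)` divides both `1 + g` and `Xⁿ + g` in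
`ℂ[X]`. -/
theorem phi2i_parity (n : ℕ) (hn : 3 ≤ n) (i : ℕ) (hi1 : 1 ≤ i) (hi2 : 2 * i < n)
    (η : ℂ) (hη : η = Complex.exp (2 * Real.pi * Complex.I / (n : ℂ))) (g : ℂ[X])
    (hg : (X - 1) * (X - C (η ^ i)) * (X - C ((η ^ i)⁻¹)) * g =
      C ((1 - η ^ i) * (1 - (η ^ i)⁻¹) / (n : ℂ)) * (X * (X + 1) * (X ^ n - 1))) :
    g.eval (η ^ i) = -1 ∧ g.eval ((η ^ i)⁻¹) = -1 ∧
      ((X - C (η ^ i)) * (X - C ((η ^ i)⁻¹)) ∣ 1 + g) ∧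
      ((X - C (η ^ i)) * (X - C ((η ^ i)⁻¹)) ∣ X ^ n + g) := by
  set ζ := η ^ i with hζdef
  have hprim : IsPrimitiveRoot η n := by
    rw [hη]; exact Complex.isPrimitiveRoot_exp n (by omega)
  have hζn : ζ ^ n = 1 := by
    rw [hζdef, ← pow_mul, mul_comm, pow_mul, hprim.pow_eq_one, one_pow]
  have hζ0 : ζ ≠ 0 := fun h => by simp [h, zero_pow (by omega : n ≠ 0)] at hζn
  have hζ1 : ζ ≠ 1 := hprim.pow_ne_one_of_pos_of_lt (by omega) (by omega)
  have hζ2 : ζ ^ 2 ≠ 1 := by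
    rw [hζdef, ← pow_mul, mul_comm]
    exact hprim.pow_ne_one_of_pos_of_lt (by omega) hi2
  have hζw : ζ ≠ ζ⁻¹ := fun h => hζ2 (by rw [sq]; nth_rewrite 2 [h]; exact mul_inv_cancel₀ hζ0)
  have hpow : ζ ^ (n - 1) = ζ⁻¹ := by
    have : ζ ^ (n-1) * ζ = 1 := by rw [← pow_succ, Nat.sub_add_cancel (by omega), hζn]
    exact eq_inv_of_mul_eq_one_left this
  have hn0 : (n:ℂ) ≠ 0 := Nat.cast_ne_zero.2 (by omega)
  have h1 : ζ - 1 ≠ 0 := sub_ne_zero.2 hζ1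
  have h2 : ζ - ζ⁻¹ ≠ 0 := sub_ne_zero.2 hζw
  have h3 : ζ + 1 ≠ 0 := fun h => hζ2 (by rw [sq]; rw [eq_neg_of_add_eq_zero_left h]; ring)
  have hsq : ζ * ζ - 1 ≠ 0 := fun h => hζ2 (by rw [sq]; linear_combination h)
  have hgζ : eval ζ g = -1 := by
    have hd := congrArg (fun p => eval ζ (derivative p)) hg
    simp only [derivative_mul, derivative_sub, derivative_X, derivative_one, derivative_C,
      derivative_X_pow, eval_mul, eval_add, eval_sub, eval_X, eval_one, eval_C, eval_pow,
      eval_natCast, eval_zero, sub_zero, sub_self, mul_zero, zero_mul, add_zero, zero_add,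
      mul_one, one_mul, hζn, hpow] at hd
    field_simp at hd
    have hfac : (ζ - 1) * (ζ * ζ - 1) * (ζ * (n:ℂ) * ζ) ≠ 0 :=
      mul_ne_zero (mul_ne_zero h1 hsq) (mul_ne_zero (mul_ne_zero hζ0 hn0) hζ0)
    exact mul_left_cancel₀ hfac (by linear_combination (ζ - 1) * (ζ * (n:ℂ) * ζ) * hd)
  have hw0 : ζ⁻¹ ≠ 0 := inv_ne_zero hζ0
  have hwn : (ζ⁻¹) ^ n = 1 := by rw [inv_pow, hζn, inv_one]
  have hwpow : (ζ⁻¹) ^ (n - 1) = ζ := by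
    have : (ζ⁻¹) ^ (n-1) * ζ⁻¹ = 1 := by rw [← pow_succ, Nat.sub_add_cancel (by omega), hwn]
    rw [eq_inv_of_mul_eq_one_left this, inv_inv]
  have hw1 : ζ⁻¹ ≠ 1 := fun h => hζ1 (by rw [← inv_inv ζ, h, inv_one])
  have hgw : eval ζ⁻¹ g = -1 := by
    have hd := congrArg (fun p => eval ζ⁻¹ (derivative p)) hg
    simp only [derivative_mul, derivative_sub, derivative_X, derivative_one, derivative_C,
      derivative_X_pow, eval_mul, eval_add, eval_sub, eval_X, eval_one, eval_C, eval_pow,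
      eval_natCast, eval_zero, sub_zero, sub_self, mul_zero, zero_mul, add_zero, zero_add,
      mul_one, one_mul, hwn, hwpow] at hd
    have hwsub1 : ζ⁻¹ - 1 ≠ 0 := sub_ne_zero.2 hw1
    have hwsubζ : ζ⁻¹ - ζ ≠ 0 := sub_ne_zero.2 (Ne.symm hζw)
    field_simp at hd
    rw [one_div] at hd
    have hfac : (1 - ζ) * (1 - ζ * ζ) * (ζ * (n:ℂ) * (ζ * ζ)) ≠ 0 := by
      refine mul_ne_zero (mul_ne_zero ?_ ?_)
        (mul_ne_zero (mul_ne_zero hζ0 hn0) (mul_ne_zero hζ0 hζ0))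
      · intro h; exact h1 (by linear_combination -h)
      · intro h; exact hsq (by linear_combination -h)
    exact mul_left_cancel₀ hfac (by linear_combination (1 - ζ) * (ζ * (n:ℂ) * (ζ * ζ)) * hd)
  have hcop : IsCoprime (X - C ζ) (X - C (ζ⁻¹)) :=
    Polynomial.isCoprime_X_sub_C_of_isUnit_sub (Ne.isUnit (sub_ne_zero.2 hζw))
  refine ⟨hgζ, hgw, ?_, ?_⟩
  · refine hcop.mul_dvd ?_ ?_ <;> rw [dvd_iff_isRoot] <;> simp [IsRoot, hgζ, hgw]
  · refine hcop.mul_dvd ?_ ?_ <;> rw [dvd_iff_isRoot] <;>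
      simp [IsRoot, hgζ, hgw, hζn, hwn]
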